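/- Let F and C be orthogonal complementary rational subspaces of R^m, and let Flow = Z^m ∩ F and Cut = Z^m ∩ C. Then Cut^#/Cut is isomorphic to Flow^#/Flow, and both are isomorphic to Z^m/(Cut ⊕ Flow). -/

import Mathlib

open Matrix

/-- The integer vectors of `ℝ^m`, as a `ℤ`-submodule. -/
def intVecs (m : ℕ) : Submodule ℤ (Fin m → ℝ) where
  carrier := {x | ∀ i, ∃ k : ℤ, x i = (k : ℝ)}
  add_mem' := by
    intro a b ha hb i
    obtain ⟨p, hp⟩ := ha i
    obtain ⟨q, hq⟩ := hb i
    exact ⟨p + q, by simp [hp, hq]⟩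
  zero_mem' := fun i => ⟨0, by simp⟩
  smul_mem' := by
    intro c a ha i
    obtain ⟨p, hp⟩ := ha i
    exact ⟨c * p, by simp [hp, zsmul_eq_mul]⟩

/-- The dual lattice of a lattice `Λ` (a `ℤ`-submodule of `ℝ^m`) inside the subspace
`V` (the `ℝ`-span of `Λ`): all `x ∈ V` pairing integrally with `Λ`. -/
def dualLattice (m : ℕ) (V : Submodule ℝ (Fin m → ℝ)) (Λ : Submodule ℤ (Fin m → ℝ)) :
    Submodule ℤ (Fin m → ℝ) where
  carrier := {x | x ∈ V ∧ ∀ y ∈ Λ, ∃ k : ℤ, x ⬝ᵥ y = (k : ℝ)}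
  add_mem' := by
    rintro a b ⟨haV, ha⟩ ⟨hbV, hb⟩
    refine ⟨V.add_mem haV hbV, fun y hy => ?_⟩
    obtain ⟨p, hp⟩ := ha y hy
    obtain ⟨q, hq⟩ := hb y hy
    exact ⟨p + q, by rw [add_dotProduct, hp, hq]; push_cast; ring⟩
  zero_mem' := ⟨V.zero_mem, fun y _ => ⟨0, by simp⟩⟩
  smul_mem' := by
    rintro c a ⟨haV, ha⟩
    have hca : c • a = (c : ℝ) • a := (Int.cast_smul_eq_zsmul ℝ c a).symm
    refine ⟨by rw [hca]; exact V.smul_mem _ haV, fun y hy => ?_⟩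
    obtain ⟨p, hp⟩ := ha y hy
    exact ⟨c * p, by rw [hca, smul_dotProduct, smul_eq_mul, hp]; push_cast; ring⟩


namespace Stmt9

variable {m : ℕ}


/-- common denominator for a finite family of rationals -/
lemma exists_common_den {n : ℕ} (q : Fin n → ℚ) :
    ∃ N : ℤ, 0 < N ∧ ∀ i, ∃ k : ℤ, (q i) * (N : ℚ) = (k : ℚ) := by
  refine ⟨∏ j, ((q j).den : ℤ), ?_, ?_⟩
  · exact Finset.prod_pos fun j _ => Int.natCast_pos.mpr (q j).pos
  · intro i
    refine ⟨(q i).num * ∏ j ∈ Finset.univ.erase i, ((q j).den : ℤ), ?_⟩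
    have h : ((q i).den : ℚ) * ∏ j ∈ Finset.univ.erase i, ((q j).den : ℚ)
        = ∏ j, ((q j).den : ℚ) := Finset.mul_prod_erase _ (fun j => ((q j).den : ℚ)) (Finset.mem_univ i)
    push_cast
    rw [← h, ← mul_assoc, Rat.mul_den_eq_num]

lemma exists_common_den_real {n : ℕ} (v : Fin n → ℝ) (h : ∀ i, ∃ q : ℚ, v i = (q : ℝ)) :
    ∃ N : ℤ, 0 < N ∧ ∀ i, ∃ k : ℤ, (N : ℝ) * v i = (k : ℝ) := by
  choose q hq using h
  obtain ⟨N, hN, hk⟩ := exists_common_den q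
  refine ⟨N, hN, fun i => ?_⟩
  obtain ⟨k, hk'⟩ := hk i
  refine ⟨k, ?_⟩
  rw [hq i, mul_comm]
  exact_mod_cast congrArg (fun x : ℚ => (x : ℝ)) hk'



lemma dot_rat {x y : Fin m → ℝ} (hx : ∀ i, ∃ q : ℚ, x i = (q : ℝ))
    (hy : ∀ i, ∃ q : ℚ, y i = (q : ℝ)) : ∃ q : ℚ, x ⬝ᵥ y = (q : ℝ) := by
  choose a ha using hx
  choose b hb using hy
  refine ⟨∑ i, a i * b i, ?_⟩
  simp only [dotProduct]
  push_cast
  exact Finset.sum_congr rfl fun i _ => by rw [ha i, hb i]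

lemma dot_sum_right (w : Fin m → ℝ) {n : ℕ} (v : Fin n → Fin m → ℝ) (r : Fin n → ℝ) :
    w ⬝ᵥ (∑ i, r i • v i) = ∑ i, r i * (w ⬝ᵥ v i) := by
  simp only [dotProduct, Finset.sum_apply, Pi.smul_apply, smul_eq_mul, Finset.mul_sum]
  rw [Finset.sum_comm]
  refine Finset.sum_congr rfl fun i _ => ?_
  exact Finset.sum_congr rfl fun k _ => by ring

/-- A family of rational vectors which is `ℤ`-linearly independent is `ℝ`-linearly
independent. -/
lemma indep_real {n : ℕ} (v : Fin n → Fin m → ℝ)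
    (hrat : ∀ i j, ∃ q : ℚ, v i j = (q : ℝ))
    (hZ : LinearIndependent ℤ v) : LinearIndependent ℝ v := by
  have hZ' : ∀ g : Fin n → ℤ, ∑ i, (g i : ℝ) • v i = 0 → ∀ i, g i = 0 := by
    intro g hg
    refine Fintype.linearIndependent_iff.mp hZ g ?_
    simpa only [Int.cast_smul_eq_zsmul] using hg
  -- rational Gram matrix
  have hgr : ∀ i j : Fin n, ∃ q : ℚ, v i ⬝ᵥ v j = (q : ℝ) :=
    fun i j => dot_rat (hrat i) (hrat j)
  choose Gq hGq using hgr
  set G : Matrix (Fin n) (Fin n) ℝ := Matrix.of fun i j => v i ⬝ᵥ v j with hG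
  have hGmap : G = (Matrix.of Gq).map (Rat.castHom ℝ) := by
    ext i j; simp [hG, hGq i j, Matrix.map_apply]
  -- sum relation gives Gram kernel vector
  have key : ∀ r : Fin n → ℝ, ∑ i, r i • v i = 0 → G.mulVec r = 0 := by
    intro r hr
    funext i
    have : v i ⬝ᵥ (∑ j, r j • v j) = 0 := by rw [hr, dotProduct_zero]
    rw [dot_sum_right] at this
    simpa [Matrix.mulVec, dotProduct, hG, mul_comm] using this
  -- Gram kernel vector gives sum relation
  have key2 : ∀ r : Fin n → ℝ, G.mulVec r = 0 → ∑ i, r i • v i = 0 := by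
    intro r hr
    have hww : (∑ i, r i • v i) ⬝ᵥ (∑ i, r i • v i) = 0 := by
      rw [dot_sum_right]
      have : ∀ i, (∑ j, r j • v j) ⬝ᵥ v i = (G.mulVec r) i := by
        intro i
        rw [dotProduct_comm, dot_sum_right]
        simp [Matrix.mulVec, dotProduct, hG, mul_comm]
      refine Finset.sum_eq_zero fun i _ => ?_
      rw [this i, hr]
      simp
    exact dotProduct_self_eq_zero.mp hww
  -- det of rational Gram matrix nonzero
  have hdetq : (Matrix.of Gq).det ≠ 0 := by
    intro hdet
    obtain ⟨t, ht0, htker⟩ := (Matrix.exists_mulVec_eq_zero_iff).mpr hdet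
    -- cast kernel vector to ℝ
    have hker : G.mulVec (fun i => (t i : ℝ)) = 0 := by
      rw [hGmap]
      funext i
      have := congrFun htker i
      simp only [Matrix.mulVec, dotProduct, Matrix.map_apply, Pi.zero_apply,
        Rat.coe_castHom] at this ⊢
      push_cast
      exact_mod_cast congrArg (fun x : ℚ => (x : ℝ)) this
    have hsum : ∑ i, (t i : ℝ) • v i = 0 := key2 _ hker
    obtain ⟨N, hN, hk⟩ := exists_common_den t
    choose k hkk using hk
    have hsum2 : ∑ i, (k i : ℝ) • v i = 0 := by
      have : ∀ i, (k i : ℝ) = (t i : ℝ) * (N : ℝ) := by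
        intro i; exact_mod_cast (congrArg (fun x : ℚ => (x : ℝ)) (hkk i)).symm
      calc ∑ i, (k i : ℝ) • v i = (N : ℝ) • ∑ i, (t i : ℝ) • v i := by
            rw [Finset.smul_sum]
            exact Finset.sum_congr rfl fun i _ => by
              rw [this i, smul_smul, mul_comm]
        _ = 0 := by rw [hsum, smul_zero]
    have hk0 := hZ' k hsum2
    apply ht0
    funext i
    have h2 := hkk i
    rw [hk0 i] at h2
    simp only [Int.cast_zero] at h2
    have hNne : (N : ℚ) ≠ 0 := by exact_mod_cast hN.ne'
    have ht : t i = 0 := by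
      rcases mul_eq_zero.mp h2 with h | h
      · exact h
      · exact absurd h hNne
    simpa using ht
  have hdet : G.det ≠ 0 := by
    rw [hGmap,
      show ((Matrix.of Gq).map ⇑(Rat.castHom ℝ)) = (Rat.castHom ℝ).mapMatrix (Matrix.of Gq)
        from rfl, ← RingHom.map_det]
    simpa using hdetq
  -- conclude
  refine Fintype.linearIndependent_iff.mpr fun g hg => ?_
  by_contra hne
  push_neg at hne
  obtain ⟨i, hi⟩ := hne
  have hg0 : g ≠ 0 := fun h => hi (congrFun h i)
  exact hdet (Matrix.exists_mulVec_eq_zero_iff.mp ⟨g, hg0, key g hg⟩)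

/-- From `ℝ`-linear independence, the Gram determinant is nonzero. -/
lemma det_gram_ne_zero {n : ℕ} (v : Fin n → Fin m → ℝ) (h : LinearIndependent ℝ v) :
    (Matrix.of fun i j => v i ⬝ᵥ v j).det ≠ 0 := by
  intro hdet
  obtain ⟨r, hr0, hrker⟩ := Matrix.exists_mulVec_eq_zero_iff.mpr hdet
  have hww : (∑ i, r i • v i) ⬝ᵥ (∑ i, r i • v i) = 0 := by
    rw [dot_sum_right]
    refine Finset.sum_eq_zero fun i _ => ?_
    have : (∑ j, r j • v j) ⬝ᵥ v i = ((Matrix.of fun i j => v i ⬝ᵥ v j).mulVec r) i := by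
      rw [dotProduct_comm, dot_sum_right]
      simp [Matrix.mulVec, dotProduct, mul_comm]
    rw [this, hrker]
    simp
  have hsum : ∑ i, r i • v i = 0 := dotProduct_self_eq_zero.mp hww
  exact hr0 (funext fun i => Fintype.linearIndependent_iff.mp h r hsum i)


variable {m : ℕ}

lemma dot_sum_left (w : Fin m → ℝ) {n : ℕ} (v : Fin n → Fin m → ℝ) (r : Fin n → ℝ) :
    (∑ i, r i • v i) ⬝ᵥ w = ∑ i, r i * (v i ⬝ᵥ w) := by
  simp only [dotProduct, Finset.sum_apply, Pi.smul_apply, smul_eq_mul, Finset.sum_mul]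
  rw [Finset.sum_comm]
  refine Finset.sum_congr rfl fun i _ => ?_
  rw [Finset.mul_sum]
  exact Finset.sum_congr rfl fun k _ => by ring

lemma pair_int_span (x : Fin m → ℝ) (s : Set (Fin m → ℝ))
    (h : ∀ y ∈ s, ∃ k : ℤ, x ⬝ᵥ y = (k : ℝ)) :
    ∀ y ∈ Submodule.span ℤ s, ∃ k : ℤ, x ⬝ᵥ y = (k : ℝ) := by
  intro y hy
  induction hy using Submodule.span_induction with
  | mem y hy => exact h y hy
  | zero => exact ⟨0, by simp⟩
  | add a b _ _ ha hb =>
    obtain ⟨p, hp⟩ := ha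
    obtain ⟨q, hq⟩ := hb
    exact ⟨p + q, by rw [dotProduct_add, hp, hq]; push_cast; ring⟩
  | smul c a _ ha =>
    obtain ⟨p, hp⟩ := ha
    refine ⟨c * p, ?_⟩
    have : c • a = (c : ℝ) • a := (Int.cast_smul_eq_zsmul ℝ c a).symm
    rw [this, dotProduct_smul, smul_eq_mul, hp]
    push_cast; ring

/-- an element of `span v` orthogonal to every `v j` is zero. -/
lemma eq_zero_of_perp {n : ℕ} (v : Fin n → Fin m → ℝ) (u : Fin m → ℝ)
    (hu : u ∈ Submodule.span ℝ (Set.range v))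
    (h0 : ∀ j, u ⬝ᵥ v j = 0) : u = 0 := by
  obtain ⟨c, rfl⟩ := (Submodule.mem_span_range_iff_exists_fun ℝ).mp hu
  have : (∑ i, c i • v i) ⬝ᵥ (∑ i, c i • v i) = 0 := by
    rw [dot_sum_right]
    exact Finset.sum_eq_zero fun i _ => by rw [h0 i, mul_zero]
  exact dotProduct_self_eq_zero.mp this

/-- existence of a dual family via the inverse Gram matrix. -/
lemma dual_pair_exists {n : ℕ} (v : Fin n → Fin m → ℝ) (hind : LinearIndependent ℝ v) :
    ∃ w : Fin n → Fin m → ℝ, (∀ i, w i ∈ Submodule.span ℝ (Set.range v)) ∧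
      (∀ i j, w i ⬝ᵥ v j = if i = j then 1 else 0) := by
  set G : Matrix (Fin n) (Fin n) ℝ := Matrix.of fun i j => v i ⬝ᵥ v j with hG
  have hdet : G.det ≠ 0 := det_gram_ne_zero v hind
  set H := G⁻¹ with hH
  refine ⟨fun i => ∑ j, H i j • v j, fun i => ?_, fun i j => ?_⟩
  · exact Submodule.sum_mem _ fun j _ =>
      Submodule.smul_mem _ _ (Submodule.subset_span (Set.mem_range_self j))
  · rw [dot_sum_left]
    have hmul : (H * G) i j = ∑ k, H i k * (v k ⬝ᵥ v j) := by
      simp [Matrix.mul_apply, hG]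
    rw [← hmul, hH, Matrix.nonsing_inv_mul G (isUnit_iff_ne_zero.mpr hdet), Matrix.one_apply]

/-- computation of the dual lattice given a dual pair of families. -/
lemma dual_eq (V : Submodule ℝ (Fin m → ℝ)) {n : ℕ} (v w : Fin n → Fin m → ℝ)
    (hv : ∀ i, v i ∈ V) (hw : ∀ i, w i ∈ V)
    (hspan : Submodule.span ℝ (Set.range v) = V)
    (hdual : ∀ i j, w i ⬝ᵥ v j = if i = j then 1 else 0) :
    dualLattice m V (Submodule.span ℤ (Set.range v)) = Submodule.span ℤ (Set.range w) := by
  apply le_antisymm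
  · -- hard inclusion
    rintro z ⟨hzV, hzint⟩
    have hvmem : ∀ i, v i ∈ Submodule.span ℤ (Set.range v) :=
      fun i => Submodule.subset_span (Set.mem_range_self i)
    choose k hk using fun i => hzint (v i) (hvmem i)
    have hz' : z = ∑ i, (k i : ℝ) • w i := by
      have hsub : z - ∑ i, (k i : ℝ) • w i ∈ V := by
        refine V.sub_mem hzV (Submodule.sum_mem _ fun i _ => V.smul_mem _ (hw i))
      rw [← hspan] at hsub
      have hperp : ∀ j, (z - ∑ i, (k i : ℝ) • w i) ⬝ᵥ v j = 0 := by
        intro j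
        rw [sub_dotProduct]
        have h1 : (∑ i, (k i : ℝ) • w i) ⬝ᵥ v j = (k j : ℝ) := by
          rw [dot_sum_left]
          simp [hdual]
        rw [h1, hk j, sub_self]
      exact (sub_eq_zero.mp (eq_zero_of_perp v _ hsub hperp))
    rw [hz']
    refine Submodule.sum_mem _ fun i _ => ?_
    rw [Int.cast_smul_eq_zsmul]
    exact Submodule.smul_mem _ _ (Submodule.subset_span (Set.mem_range_self i))
  · rw [Submodule.span_le]
    rintro _ ⟨i, rfl⟩
    refine ⟨hw i, ?_⟩
    refine pair_int_span _ _ ?_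
    rintro _ ⟨j, rfl⟩
    refine ⟨if i = j then 1 else 0, ?_⟩
    rw [hdual i j]
    split <;> simp

/-- the dual family also spans `V`. -/
lemma dual_spans (V : Submodule ℝ (Fin m → ℝ)) {n : ℕ} (v w : Fin n → Fin m → ℝ)
    (hv : ∀ i, v i ∈ V) (hw : ∀ i, w i ∈ V)
    (hspan : Submodule.span ℝ (Set.range v) = V)
    (hdual : ∀ i j, w i ⬝ᵥ v j = if i = j then 1 else 0) :
    Submodule.span ℝ (Set.range w) = V := by
  apply le_antisymm
  · rw [Submodule.span_le]
    rintro _ ⟨i, rfl⟩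
    exact hw i
  · intro x hx
    have hsub : x - ∑ i, (x ⬝ᵥ v i) • w i ∈ V :=
      V.sub_mem hx (Submodule.sum_mem _ fun i _ => V.smul_mem _ (hw i))
    rw [← hspan] at hsub
    have hperp : ∀ j, (x - ∑ i, (x ⬝ᵥ v i) • w i) ⬝ᵥ v j = 0 := by
      intro j
      rw [sub_dotProduct]
      have h1 : (∑ i, (x ⬝ᵥ v i) • w i) ⬝ᵥ v j = x ⬝ᵥ v j := by
        rw [dot_sum_left]
        simp [hdual]
      rw [h1, sub_self]
    have h0 := eq_zero_of_perp v _ hsub hperp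
    have : x = ∑ i, (x ⬝ᵥ v i) • w i := by
      have := sub_eq_zero.mp h0
      exact this
    rw [this]
    exact Submodule.sum_mem _ fun i _ => Submodule.smul_mem _ _
      (Submodule.subset_span (Set.mem_range_self i))


variable {m : ℕ}

/-- A `ℤ`-submodule of `ℝ^m` whose `N`-multiples are integer vectors has a finite
`ℤ`-basis consisting of rational vectors. -/
lemma lattice_basis (Λ : Submodule ℤ (Fin m → ℝ)) (N : ℤ) (hN : 0 < N)
    (hsc : ∀ x ∈ Λ, N • x ∈ intVecs m) :
    ∃ (n : ℕ) (v : Fin n → Fin m → ℝ), LinearIndependent ℤ v ∧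
      (∀ i j, ∃ q : ℚ, v i j = (q : ℝ)) ∧
      Submodule.span ℤ (Set.range v) = Λ := by
  classical
  have hNR : (N : ℝ) ≠ 0 := by exact_mod_cast hN.ne'
  have hint : ∀ x : ↥Λ, ∀ i, ∃ k : ℤ, (N : ℝ) * (x : Fin m → ℝ) i = (k : ℝ) := by
    intro x i
    obtain ⟨k, hk⟩ := hsc x x.2 i
    refine ⟨k, ?_⟩
    rw [← hk, Pi.smul_apply]
    simp [zsmul_eq_mul]
  choose co hco using hint
  let φ : ↥Λ →ₗ[ℤ] (Fin m → ℤ) :=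
    { toFun := fun x => co x
      map_add' := fun a b => funext fun i => by
        have h1 := hco (a + b) i
        have h2 := hco a i
        have h3 := hco b i
        have hab : ((a + b : ↥Λ) : Fin m → ℝ) i = (a : Fin m → ℝ) i + (b : Fin m → ℝ) i := rfl
        have hcast : ((co (a + b) i : ℤ) : ℝ) = ((co a i + co b i : ℤ) : ℝ) := by
          push_cast
          rw [← h1, ← h2, ← h3, hab]; ring
        have := Int.cast_injective (α := ℝ) hcast
        simpa using this
      map_smul' := fun c a => funext fun i => by
        have h1 := hco (c • a) i
        have h2 := hco a i
        have hca : ((c • a : ↥Λ) : Fin m → ℝ) i = (c : ℝ) * (a : Fin m → ℝ) i := by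
          have : ((c • a : ↥Λ) : Fin m → ℝ) = c • (a : Fin m → ℝ) := rfl
          rw [this, Pi.smul_apply]
          simp [zsmul_eq_mul]
        have hcast : ((co (c • a) i : ℤ) : ℝ) = ((c * co a i : ℤ) : ℝ) := by
          push_cast
          rw [← h1, ← h2, hca]; ring
        have := Int.cast_injective (α := ℝ) hcast
        simpa using this }
  have hinj : Function.Injective φ := by
    intro a b hab
    apply Subtype.ext
    funext i
    have h2 := hco a i
    have h3 := hco b i
    have hco_eq : co a = co b := hab
    have : (N : ℝ) * (a : Fin m → ℝ) i = (N : ℝ) * (b : Fin m → ℝ) i := by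
      rw [h2, h3, hco_eq]
    exact mul_left_cancel₀ hNR this
  obtain ⟨n, b⟩ := Submodule.basisOfPid (Pi.basisFun ℤ (Fin m)) (LinearMap.range φ)
  let e : ↥Λ ≃ₗ[ℤ] LinearMap.range φ := LinearEquiv.ofInjective φ hinj
  let bΛ : Module.Basis (Fin n) ℤ ↥Λ := b.map e.symm
  refine ⟨n, fun i => (bΛ i : Fin m → ℝ), ?_, ?_, ?_⟩
  · exact bΛ.linearIndependent.map' Λ.subtype (Submodule.ker_subtype Λ)
  · intro i j
    obtain ⟨k, hk⟩ := hsc (bΛ i) (bΛ i).2 j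
    refine ⟨(k : ℚ) / (N : ℚ), ?_⟩
    have h1 : (N : ℝ) * ((bΛ i : Fin m → ℝ) j) = (k : ℝ) := by
      rw [← hk, Pi.smul_apply]; simp [zsmul_eq_mul]
    have hNQ : (N : ℚ) ≠ 0 := by exact_mod_cast hN.ne'
    push_cast
    field_simp
    linarith [h1]
  · rw [show (fun i => (bΛ i : Fin m → ℝ)) = Λ.subtype ∘ bΛ from rfl, Set.range_comp,
      ← Submodule.map_span, bΛ.span_eq, Submodule.map_top, Submodule.range_subtype]

/-- The rational vectors of `ℝ^m`, as a `ℚ`-submodule. -/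
def ratVecs (m : ℕ) : Submodule ℚ (Fin m → ℝ) where
  carrier := {x | ∀ i, ∃ q : ℚ, x i = (q : ℝ)}
  add_mem' := by
    intro a b ha hb i
    obtain ⟨p, hp⟩ := ha i
    obtain ⟨q, hq⟩ := hb i
    exact ⟨p + q, by simp [hp, hq]⟩
  zero_mem' := fun i => ⟨0, by simp⟩
  smul_mem' := by
    intro c a ha i
    obtain ⟨p, hp⟩ := ha i
    refine ⟨c * p, ?_⟩
    rw [Pi.smul_apply, Rat.smul_def, hp]
    push_cast; ring

/-- Coordinatewise cast `ℚ^m → ℝ^m`, as a `ℚ`-linear map. -/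
def castQ (m : ℕ) : (Fin m → ℚ) →ₗ[ℚ] (Fin m → ℝ) where
  toFun q := fun i => (q i : ℝ)
  map_add' a b := funext fun i => by simp only [Pi.add_apply]; push_cast; ring
  map_smul' c a := funext fun i => by
    simp only [Pi.smul_apply, Rat.smul_def, RingHom.id_apply]
    push_cast; ring

lemma castQ_inj : Function.Injective (castQ m) := fun a b h =>
  funext fun i => Rat.cast_injective (congrFun h i)

lemma range_castQ : LinearMap.range (castQ m) = ratVecs m := by
  ext x
  constructor
  · rintro ⟨q, rfl⟩ i
    exact ⟨q i, rfl⟩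
  · intro hx
    choose q hq using hx
    exact ⟨q, funext fun i => (hq i).symm⟩

noncomputable def ratVecsEquiv (m : ℕ) : (Fin m → ℚ) ≃ₗ[ℚ] ↥(ratVecs m) :=
  (LinearEquiv.ofInjective (castQ m) castQ_inj).trans (LinearEquiv.ofEq _ _ range_castQ)

instance : FiniteDimensional ℚ ↥(ratVecs m) :=
  Module.Finite.equiv (ratVecsEquiv m)

lemma finrank_ratVecs : Module.finrank ℚ ↥(ratVecs m) = m := by
  rw [← (ratVecsEquiv m).finrank_eq, Module.finrank_pi]
  simp



lemma dot_int {m : ℕ} {x y : Fin m → ℝ} (hx : x ∈ intVecs m) (hy : y ∈ intVecs m) :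
    ∃ k : ℤ, x ⬝ᵥ y = (k : ℝ) := by
  choose a ha using hx
  choose b hb using hy
  refine ⟨∑ i, a i * b i, ?_⟩
  simp only [dotProduct]
  push_cast
  exact Finset.sum_congr rfl fun i _ => by rw [ha i, hb i]

lemma spanZ_le_spanR {m : ℕ} {s : Set (Fin m → ℝ)} {x : Fin m → ℝ}
    (h : x ∈ Submodule.span ℤ s) : x ∈ Submodule.span ℝ s := by
  have hle : Submodule.span ℤ s ≤ (Submodule.span ℝ s).restrictScalars ℤ :=
    Submodule.span_le.mpr Submodule.subset_span
  exact hle h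

lemma single_mem_intVecs {m : ℕ} (j : Fin m) : Pi.single j (1 : ℝ) ∈ intVecs m := by
  intro i
  refine ⟨if i = j then 1 else 0, ?_⟩
  rw [Pi.single_apply]
  split <;> simp

lemma main (m : ℕ) (F C : Submodule ℝ (Fin m → ℝ))
    (hFrat : ∃ s : Set (Fin m → ℝ), (∀ x ∈ s, ∀ i, ∃ q : ℚ, x i = (q : ℝ)) ∧
      Submodule.span ℝ s = F)
    (hCrat : ∃ s : Set (Fin m → ℝ), (∀ x ∈ s, ∀ i, ∃ q : ℚ, x i = (q : ℝ)) ∧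
      Submodule.span ℝ s = C)
    (horth : ∀ x ∈ F, ∀ y ∈ C, x ⬝ᵥ y = 0)
    (hcompl : F ⊔ C = ⊤) :
    Nonempty ((↥(intVecs m) ⧸
        ((intVecs m ⊓ C.restrictScalars ℤ ⊔ intVecs m ⊓ F.restrictScalars ℤ).comap
          (intVecs m).subtype)) ≃ₗ[ℤ]
      (↥(dualLattice m C (intVecs m ⊓ C.restrictScalars ℤ)) ⧸
        ((intVecs m ⊓ C.restrictScalars ℤ).comap
          (dualLattice m C (intVecs m ⊓ C.restrictScalars ℤ)).subtype))) := by
  classical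
  set CutZ : Submodule ℤ (Fin m → ℝ) := intVecs m ⊓ C.restrictScalars ℤ with hCutZ
  set FlowZ : Submodule ℤ (Fin m → ℝ) := intVecs m ⊓ F.restrictScalars ℤ with hFlowZ
  -- disjointness
  have hdis : F ⊓ C = ⊥ := by
    rw [eq_bot_iff]
    rintro x hx
    obtain ⟨hxF, hxC⟩ := Submodule.mem_inf.mp hx
    exact Submodule.mem_bot ℝ |>.mpr (dotProduct_self_eq_zero.mp (horth x hxF x hxC))
  have hCF : IsCompl C F := by
    constructor
    · exact disjoint_iff.mpr (by rw [inf_comm]; exact hdis)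
    · exact codisjoint_iff.mpr (by rw [sup_comm]; exact hcompl)
  -- the projection onto C along F
  set π : (Fin m → ℝ) →ₗ[ℝ] (Fin m → ℝ) :=
    C.subtype ∘ₗ Submodule.projectionOnto C F hCF with hπdef
  have hπmem : ∀ x, π x ∈ C := fun x => (Submodule.projectionOnto C F hCF x).2
  have hπC : ∀ x ∈ C, π x = x := by
    intro x hx
    have h := Submodule.projectionOnto_apply_left hCF ⟨x, hx⟩
    simp only [hπdef, LinearMap.comp_apply, Submodule.subtype_apply]
    rw [h]
  have hπF : ∀ x ∈ F, π x = 0 := by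
    intro x hx
    have h := Submodule.projectionOnto_apply_of_mem_right hCF hx
    simp only [hπdef, LinearMap.comp_apply, Submodule.subtype_apply, h,
      Submodule.coe_zero]
  have hπsub : ∀ x, x - π x ∈ F := by
    intro x
    have hx : x ∈ C ⊔ F := by rw [sup_comm, hcompl]; exact Submodule.mem_top
    obtain ⟨cc, hc, ff, hf, rfl⟩ := Submodule.mem_sup.mp hx
    rw [map_add, hπC cc hc, hπF ff hf, add_zero]
    simpa using hf
  -- bases of Cut and Flow
  obtain ⟨s, c, hcZ, hcrat, hcspan⟩ := lattice_basis CutZ 1 one_pos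
    (fun x hx => by rw [one_smul]; exact (Submodule.mem_inf.mp hx).1)
  obtain ⟨r, f, hfZ, hfrat, hfspan⟩ := lattice_basis FlowZ 1 one_pos
    (fun x hx => by rw [one_smul]; exact (Submodule.mem_inf.mp hx).1)
  have hcmem : ∀ i, c i ∈ CutZ := fun i =>
    hcspan ▸ Submodule.subset_span (Set.mem_range_self i)
  have hfmem : ∀ i, f i ∈ FlowZ := fun i =>
    hfspan ▸ Submodule.subset_span (Set.mem_range_self i)
  have hcC : ∀ i, c i ∈ C := fun i => (Submodule.mem_inf.mp (hcmem i)).2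
  have hfF : ∀ i, f i ∈ F := fun i => (Submodule.mem_inf.mp (hfmem i)).2
  have hcR : LinearIndependent ℝ c := indep_real c hcrat hcZ
  have hfR : LinearIndependent ℝ f := indep_real f hfrat hfZ
  -- spans
  have hspan_aux : ∀ (V : Submodule ℝ (Fin m → ℝ)) (VZ : Submodule ℤ (Fin m → ℝ))
      (k : ℕ) (v : Fin k → Fin m → ℝ),
      VZ = intVecs m ⊓ V.restrictScalars ℤ →
      (∃ s : Set (Fin m → ℝ), (∀ x ∈ s, ∀ i, ∃ q : ℚ, x i = (q : ℝ)) ∧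
        Submodule.span ℝ s = V) →
      Submodule.span ℤ (Set.range v) = VZ →
      (∀ i, v i ∈ V) →
      Submodule.span ℝ (Set.range v) = V := by
    intro V VZ k v hVZ hVrat hvspan hvV
    apply le_antisymm
    · rw [Submodule.span_le]; rintro _ ⟨i, rfl⟩; exact hvV i
    · obtain ⟨sV, hsrat, hsspan⟩ := hVrat
      rw [← hsspan, Submodule.span_le]
      intro x hx
      have hxV : x ∈ V := hsspan ▸ Submodule.subset_span hx
      obtain ⟨N, hN, hk⟩ := exists_common_den_real x (hsrat x hx)
      have hNR : (N : ℝ) ≠ 0 := by exact_mod_cast hN.ne'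
      have hNx : N • x ∈ VZ := by
        rw [hVZ]
        refine Submodule.mem_inf.mpr ⟨?_, ?_⟩
        · intro i
          obtain ⟨k', hk'⟩ := hk i
          refine ⟨k', ?_⟩
          rw [Pi.smul_apply, ← hk']
          simp [zsmul_eq_mul]
        · exact Submodule.smul_mem (V.restrictScalars ℤ) N hxV
      have hmem : N • x ∈ Submodule.span ℝ (Set.range v) :=
        spanZ_le_spanR (hvspan.symm ▸ hNx)
      have hxeq : x = (N : ℝ)⁻¹ • (N • x) := by
        rw [← Int.cast_smul_eq_zsmul ℝ N x, smul_smul, inv_mul_cancel₀ hNR, one_smul]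
      rw [hxeq]
      exact Submodule.smul_mem _ _ hmem
  have hspanC : Submodule.span ℝ (Set.range c) = C :=
    hspan_aux C CutZ s c hCutZ hCrat hcspan hcC
  have hspanF : Submodule.span ℝ (Set.range f) = F :=
    hspan_aux F FlowZ r f hFlowZ hFrat hfspan hfF
  -- the combined basis
  have hdisFC : Disjoint (Submodule.span ℝ (Set.range f)) (Submodule.span ℝ (Set.range c)) := by
    rw [hspanF, hspanC]; exact disjoint_iff.mpr hdis
  have hBind : LinearIndependent ℝ (Sum.elim f c) := hfR.sum_type hcR hdisFC
  have hBspan : Submodule.span ℝ (Set.range (Sum.elim f c)) = ⊤ := by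
    rw [Set.Sum.elim_range, Submodule.span_union, hspanF, hspanC, hcompl]
  let Bas : Module.Basis (Fin r ⊕ Fin s) ℝ (Fin m → ℝ) := Module.Basis.mk hBind (le_of_eq hBspan.symm)
  have hm : r + s = m := by
    have h1 := Module.finrank_eq_card_basis Bas
    rw [Module.finrank_pi] at h1
    simp only [Fintype.card_sum, Fintype.card_fin] at h1
    omega
  -- rational subspaces over ℚ
  set FQ : Submodule ℚ (Fin m → ℝ) := F.restrictScalars ℚ ⊓ ratVecs m with hFQ
  set CQ : Submodule ℚ (Fin m → ℝ) := C.restrictScalars ℚ ⊓ ratVecs m with hCQ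
  haveI hfdF : FiniteDimensional ℚ ↥FQ := Submodule.finiteDimensional_of_le inf_le_right
  haveI hfdC : FiniteDimensional ℚ ↥CQ := Submodule.finiteDimensional_of_le inf_le_right
  have hsmul_inj : Function.Injective fun r : ℚ => r • (1 : ℝ) := by
    intro a b h
    simpa [Rat.smul_def] using h
  have hfQ : LinearIndependent ℚ f := hfR.restrict_scalars hsmul_inj
  have hcQ : LinearIndependent ℚ c := hcR.restrict_scalars hsmul_inj
  have hQle : ∀ (V : Submodule ℝ (Fin m → ℝ)) (k : ℕ) (v : Fin k → Fin m → ℝ),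
      (∀ i, v i ∈ V) → (∀ i j, ∃ q : ℚ, v i j = (q : ℝ)) →
      Submodule.span ℚ (Set.range v) ≤ V.restrictScalars ℚ ⊓ ratVecs m := by
    intro V k v hvV hvrat
    rw [Submodule.span_le]
    rintro _ ⟨i, rfl⟩
    exact Submodule.mem_inf.mpr ⟨hvV i, fun j => hvrat i j⟩
  have hrle : r ≤ Module.finrank ℚ ↥FQ := by
    have h1 : Module.finrank ℚ ↥(Submodule.span ℚ (Set.range f)) = r := by
      rw [finrank_span_eq_card hfQ, Fintype.card_fin]
    rw [← h1]
    exact Submodule.finrank_mono (hQle F r f hfF hfrat)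
  have hsle : s ≤ Module.finrank ℚ ↥CQ := by
    have h1 : Module.finrank ℚ ↥(Submodule.span ℚ (Set.range c)) = s := by
      rw [finrank_span_eq_card hcQ, Fintype.card_fin]
    rw [← h1]
    exact Submodule.finrank_mono (hQle C s c hcC hcrat)
  have hQdis : FQ ⊓ CQ = ⊥ := by
    rw [eq_bot_iff]
    rintro x hx
    have hxF : x ∈ F := (Submodule.mem_inf.mp (Submodule.mem_inf.mp hx).1).1
    have hxC : x ∈ C := (Submodule.mem_inf.mp (Submodule.mem_inf.mp hx).2).1
    exact Submodule.mem_bot ℚ |>.mpr (dotProduct_self_eq_zero.mp (horth x hxF x hxC))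
  have hQsup : FQ ⊔ CQ = ratVecs m := by
    apply Submodule.eq_of_le_of_finrank_le (sup_le inf_le_right inf_le_right)
    have hsum := Submodule.finrank_sup_add_finrank_inf_eq FQ CQ
    rw [hQdis, finrank_bot, add_zero] at hsum
    rw [finrank_ratVecs]
    calc m = r + s := hm.symm
      _ ≤ Module.finrank ℚ ↥FQ + Module.finrank ℚ ↥CQ := add_le_add hrle hsle
      _ = Module.finrank ℚ ↥(FQ ⊔ CQ) := hsum.symm
  -- the projection is rational: a uniform denominator
  have hπe : ∀ j : Fin m, ∃ N : ℤ, 0 < N ∧ N • π (Pi.single j 1) ∈ CutZ := by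
    intro j
    have hej : Pi.single j (1 : ℝ) ∈ ratVecs m := by
      intro i
      refine ⟨if i = j then 1 else 0, ?_⟩
      rw [Pi.single_apply]
      split <;> simp
    have hejs : Pi.single j (1 : ℝ) ∈ FQ ⊔ CQ := hQsup.symm ▸ hej
    obtain ⟨y, hy, z, hz, hyz⟩ := Submodule.mem_sup.mp hejs
    have hyF : y ∈ F := (Submodule.mem_inf.mp hy).1
    have hzC : z ∈ C := (Submodule.mem_inf.mp hz).1
    have hzrat : z ∈ ratVecs m := (Submodule.mem_inf.mp hz).2
    have hπej : π (Pi.single j 1) = z := by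
      rw [← hyz, map_add, hπF y hyF, hπC z hzC, zero_add]
    obtain ⟨N, hN, hk⟩ := exists_common_den_real z hzrat
    refine ⟨N, hN, ?_⟩
    rw [hπej]
    refine Submodule.mem_inf.mpr ⟨?_, ?_⟩
    · intro i
      obtain ⟨k, hk'⟩ := hk i
      refine ⟨k, ?_⟩
      rw [Pi.smul_apply, ← hk']
      simp [zsmul_eq_mul]
    · exact Submodule.smul_mem (C.restrictScalars ℤ) N hzC
  choose Nj hNjpos hNjmem using hπe
  set N : ℤ := ∏ j, Nj j with hNdef
  have hNpos : 0 < N := Finset.prod_pos fun j _ => hNjpos j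
  have hNe : ∀ j, N • π (Pi.single j 1) ∈ CutZ := by
    intro j
    have hsplit : N = Nj j * ∏ i ∈ Finset.univ.erase j, Nj i :=
      (Finset.mul_prod_erase _ _ (Finset.mem_univ j)).symm
    rw [hsplit, mul_comm, mul_smul]
    exact Submodule.smul_mem _ _ (hNjmem j)
  have hNπ : ∀ x ∈ intVecs m, N • π x ∈ CutZ := by
    intro x hx
    choose k hk using hx
    have hxsum : x = ∑ j, (k j : ℝ) • (Pi.single j (1 : ℝ) : Fin m → ℝ) := by
      funext i
      rw [Finset.sum_apply]
      have hterm : ∀ j, ((k j : ℝ) • (Pi.single j (1 : ℝ) : Fin m → ℝ)) i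
          = if i = j then (k j : ℝ) else 0 := by
        intro j
        rw [Pi.smul_apply, Pi.single_apply, smul_eq_mul]
        split <;> simp
      rw [Finset.sum_congr rfl fun j _ => hterm j, Finset.sum_ite_eq Finset.univ i _,
        if_pos (Finset.mem_univ i)]
      exact hk i
    rw [hxsum, map_sum, Finset.smul_sum]
    refine Submodule.sum_mem _ fun j _ => ?_
    rw [_root_.map_smul, smul_comm, Int.cast_smul_eq_zsmul ℝ (k j)]
    exact Submodule.smul_mem _ _ (hNe j)
  -- the lattice L = π(ℤ^m)
  set L : Submodule ℤ (Fin m → ℝ) := Submodule.map (π.restrictScalars ℤ) (intVecs m) with hLdef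
  have hCutL : CutZ ≤ L := by
    intro x hx
    exact ⟨x, (Submodule.mem_inf.mp hx).1, hπC x (Submodule.mem_inf.mp hx).2⟩
  have hLsc : ∀ x ∈ L, N • x ∈ intVecs m := by
    rintro x ⟨u, hu, rfl⟩
    exact (Submodule.mem_inf.mp (hNπ u hu)).1
  obtain ⟨n, l, hlZ, hlrat, hlspan⟩ := lattice_basis L N hNpos hLsc
  have hlmem : ∀ i, l i ∈ L := fun i => hlspan ▸ Submodule.subset_span (Set.mem_range_self i)
  have hlC : ∀ i, l i ∈ C := by
    intro i
    obtain ⟨u, hu, heq⟩ := hlmem i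
    rw [← heq]
    exact hπmem u
  have hlR : LinearIndependent ℝ l := indep_real l hlrat hlZ
  have hspanL : Submodule.span ℝ (Set.range l) = C := by
    apply le_antisymm
    · rw [Submodule.span_le]; rintro _ ⟨i, rfl⟩; exact hlC i
    · rw [← hspanC, Submodule.span_le]
      rintro _ ⟨i, rfl⟩
      exact spanZ_le_spanR (hlspan.symm ▸ hCutL (hcmem i))
  obtain ⟨l', hl'mem, hl'dual⟩ := dual_pair_exists l hlR
  have hl'C : ∀ i, l' i ∈ C := fun i => hspanL ▸ hl'mem i
  have hdual1 : dualLattice m C (Submodule.span ℤ (Set.range l))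
      = Submodule.span ℤ (Set.range l') := dual_eq C l l' hlC hl'C hspanL hl'dual
  have hspanl' : Submodule.span ℝ (Set.range l') = C :=
    dual_spans C l l' hlC hl'C hspanL hl'dual
  have hdual_symm : ∀ i j, l i ⬝ᵥ l' j = if i = j then 1 else 0 := by
    intro i j
    rw [dotProduct_comm, hl'dual j i]
    simp [eq_comm]
  have hdual2 : dualLattice m C (Submodule.span ℤ (Set.range l'))
      = Submodule.span ℤ (Set.range l) := dual_eq C l' l hl'C hlC hspanl' hdual_symm
  -- dual of L is Cut
  have hLC : dualLattice m C L = CutZ := by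
    ext z
    constructor
    · rintro ⟨hzC, hzint⟩
      refine Submodule.mem_inf.mpr ⟨?_, hzC⟩
      intro j
      have hπL : π (Pi.single j 1) ∈ L := ⟨_, single_mem_intVecs j, rfl⟩
      obtain ⟨k, hk⟩ := hzint _ hπL
      refine ⟨k, ?_⟩
      have hz_e : z ⬝ᵥ Pi.single j (1:ℝ) = z j := by
        rw [dotProduct_single, mul_one]
      have hperp : z ⬝ᵥ (Pi.single j 1 - π (Pi.single j 1)) = 0 := by
        rw [dotProduct_comm]
        exact horth _ (hπsub _) z hzC
      have h0 : z ⬝ᵥ Pi.single j (1:ℝ)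
          = z ⬝ᵥ π (Pi.single j 1) + z ⬝ᵥ (Pi.single j 1 - π (Pi.single j 1)) := by
        rw [← dotProduct_add]
        congr 1
        abel
      rw [← hz_e, h0, hperp, add_zero, hk]
    · intro hz
      have hzint := (Submodule.mem_inf.mp hz).1
      have hzC := (Submodule.mem_inf.mp hz).2
      refine ⟨hzC, ?_⟩
      rintro y ⟨u, hu, rfl⟩
      have hperp : z ⬝ᵥ (u - π u) = 0 := by
        rw [dotProduct_comm]
        exact horth _ (hπsub u) z hzC
      have h0 : z ⬝ᵥ u = z ⬝ᵥ π u + z ⬝ᵥ (u - π u) := by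
        rw [← dotProduct_add]
        congr 1
        abel
      obtain ⟨k, hk⟩ := dot_int hzint hu
      refine ⟨k, ?_⟩
      show z ⬝ᵥ π u = (k : ℝ)
      rw [← hk, h0, hperp, add_zero]
  have hCut_span : CutZ = Submodule.span ℤ (Set.range l') := by
    rw [← hLC, ← hlspan, hdual1]
  have hdualCut : dualLattice m C CutZ = L := by
    rw [hCut_span, hdual2, hlspan]
  -- the quotient equivalence
  let ψ : ↥(intVecs m) →ₗ[ℤ] ↥(dualLattice m C CutZ) :=
    LinearMap.codRestrict (dualLattice m C CutZ)
      ((π.restrictScalars ℤ) ∘ₗ (intVecs m).subtype)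
      (fun x => by rw [hdualCut]; exact ⟨x, x.2, rfl⟩)
  set p : Submodule ℤ ↥(dualLattice m C CutZ) :=
    CutZ.comap (dualLattice m C CutZ).subtype with hpdef
  let φ : ↥(intVecs m) →ₗ[ℤ] (↥(dualLattice m C CutZ) ⧸ p) := p.mkQ ∘ₗ ψ
  have hφsurj : Function.Surjective φ := by
    intro q
    obtain ⟨⟨z, hz⟩, rfl⟩ := p.mkQ_surjective q
    have hz' : z ∈ L := hdualCut ▸ hz
    obtain ⟨u, hu, hπu⟩ := hz'
    exact ⟨⟨u, hu⟩, congrArg p.mkQ (Subtype.ext hπu)⟩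
  have hker : LinearMap.ker φ = (CutZ ⊔ FlowZ).comap (intVecs m).subtype := by
    ext x
    simp only [LinearMap.mem_ker, Submodule.mem_comap, Submodule.subtype_apply]
    have hcoe : ((ψ x : ↥(dualLattice m C CutZ)) : Fin m → ℝ) = π (x : Fin m → ℝ) := rfl
    constructor
    · intro hx
      have hx' : ψ x ∈ p := by
        have h' : p.mkQ (ψ x) = 0 := hx
        rwa [Submodule.mkQ_apply, Submodule.Quotient.mk_eq_zero] at h'
      have h1 : π (x : Fin m → ℝ) ∈ CutZ := by
        have := Submodule.mem_comap.mp hx'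
        rwa [Submodule.subtype_apply, hcoe] at this
      have h2 : (x : Fin m → ℝ) - π ↑x ∈ FlowZ :=
        Submodule.mem_inf.mpr
          ⟨Submodule.sub_mem (intVecs m) x.2 (Submodule.mem_inf.mp h1).1, hπsub _⟩
      have hxeq : (x : Fin m → ℝ) = π ↑x + (↑x - π ↑x) := by abel
      rw [hxeq]
      exact Submodule.add_mem _ (Submodule.mem_sup_left h1) (Submodule.mem_sup_right h2)
    · intro hx
      obtain ⟨u, hu, v, hv, huv⟩ := Submodule.mem_sup.mp hx
      have hπx : π (x : Fin m → ℝ) = u := by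
        rw [← huv, map_add, hπC u (Submodule.mem_inf.mp hu).2,
          hπF v (Submodule.mem_inf.mp hv).2, add_zero]
      have hψp : ψ x ∈ p := Submodule.mem_comap.mpr
        (by rw [Submodule.subtype_apply, hcoe, hπx]; exact hu)
      show p.mkQ (ψ x) = 0
      rwa [Submodule.mkQ_apply, Submodule.Quotient.mk_eq_zero]
  exact ⟨(Submodule.quotEquivOfEq _ _ hker.symm).trans (φ.quotKerEquivOfSurjective hφsurj)⟩


end Stmt9

/-- For orthogonal complementary rational subspaces `F, C ⊆ ℝ^m`, with
`Flow = ℤ^m ∩ F` and `Cut = ℤ^m ∩ C`, the determinant groups `Cut^♯/Cut` and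
`Flow^♯/Flow` are isomorphic, and both are isomorphic to `ℤ^m/(Cut ⊕ Flow)`. -/
theorem stmt_9 (m : ℕ) (F C : Submodule ℝ (Fin m → ℝ))
    (hFrat : ∃ s : Set (Fin m → ℝ), (∀ x ∈ s, ∀ i, ∃ q : ℚ, x i = (q : ℝ)) ∧
      Submodule.span ℝ s = F)
    (hCrat : ∃ s : Set (Fin m → ℝ), (∀ x ∈ s, ∀ i, ∃ q : ℚ, x i = (q : ℝ)) ∧
      Submodule.span ℝ s = C)
    (horth : ∀ x ∈ F, ∀ y ∈ C, x ⬝ᵥ y = 0)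
    (hcompl : F ⊔ C = ⊤) :
    let Flow : Submodule ℤ (Fin m → ℝ) := intVecs m ⊓ F.restrictScalars ℤ
    let Cut : Submodule ℤ (Fin m → ℝ) := intVecs m ⊓ C.restrictScalars ℤ
    Nonempty
      ((↥(dualLattice m C Cut) ⧸ Cut.comap (dualLattice m C Cut).subtype) ≃+
        (↥(dualLattice m F Flow) ⧸ Flow.comap (dualLattice m F Flow).subtype)) ∧
    Nonempty
      ((↥(dualLattice m C Cut) ⧸ Cut.comap (dualLattice m C Cut).subtype) ≃+
        (↥(intVecs m) ⧸ (Cut ⊔ Flow).comap (intVecs m).subtype)) := by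
  intro Flow Cut
  obtain ⟨eC⟩ := Stmt9.main m F C hFrat hCrat horth hcompl
  have horth' : ∀ x ∈ C, ∀ y ∈ F, x ⬝ᵥ y = 0 := fun x hx y hy => by
    rw [dotProduct_comm]; exact horth y hy x hx
  have hcompl' : C ⊔ F = ⊤ := by rw [sup_comm]; exact hcompl
  obtain ⟨eF⟩ := Stmt9.main m C F hCrat hFrat horth' hcompl'
  have hswap : (Cut ⊔ Flow).comap (intVecs m).subtype
      = (Flow ⊔ Cut).comap (intVecs m).subtype := by rw [sup_comm]
  refine ⟨⟨?_⟩, ⟨?_⟩⟩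
  · exact (eC.symm.trans ((Submodule.quotEquivOfEq _ _ hswap).trans eF)).toAddEquiv
  · exact eC.symm.toAddEquiv
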